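/- Let γ ∈ [0,2] and let g : ℝ³×[0,∞) → [0,∞) be measurable with 0 < ∫_{ℝ³×[0,∞)} g dv_* dI_* < ∞, ∫_{ℝ³×[0,∞)} g(v_*,I_*) ⟨v_*,I_*⟩_j^{γ} dv_* dI_* < ∞, and H[g] = ∫_{ℝ³×[0,∞)} g |log g| dv_* dI_* < ∞. Then there exists a constant c > 0 such that for every (v,I) ∈ ℝ³×[0,∞): ∫_{ℝ³×[0,∞)} g(v_*,I_*) · (E/m)^{γ/2} dv_* dI_* ≥ c · ⟨v,I⟩_i^{γ}, where E = (μ/2)|v−v_*|² + I + I_*. -/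

import Mathlib

open MeasureTheory Real Set
open scoped ENNReal Classical

noncomputable section

/-- `ℝ³` as a Euclidean space. -/
abbrev E3 := EuclideanSpace ℝ (Fin 3)

/-- The surface measure on the unit sphere `𝕊² ⊂ ℝ³` (total mass `4π`). -/
def sphM : Measure (Metric.sphere (0 : E3) 1) := (volume : Measure E3).toSphere

/-- The phase-space region `ℝ³ × [0,∞)`. -/
def regionVI : Set (E3 × ℝ) := {p | 0 ≤ p.2}

/-- Total energy `E = (μ/2)|v - v_*|² + I + I_*` with reduced mass `μ = m_i m_j/(m_i+m_j)`. -/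
def EE (mi mj : ℝ) (v vs : E3) (I Is : ℝ) : ℝ :=
  mi * mj / (mi + mj) / 2 * ‖v - vs‖ ^ 2 + I + Is

/-- Post-collisional velocity `v' = V + (m_j/M)√(2RE/μ) σ`. -/
def vprime (mi mj : ℝ) (v vs σ : E3) (I Is R : ℝ) : E3 :=
  (mi / (mi + mj)) • v + (mj / (mi + mj)) • vs +
    (mj / (mi + mj) * Real.sqrt (2 * R * EE mi mj v vs I Is / (mi * mj / (mi + mj)))) • σ

/-- Post-collisional partner velocity `v'_* = V - (m_i/M)√(2RE/μ) σ`. -/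
def vsprime (mi mj : ℝ) (v vs σ : E3) (I Is R : ℝ) : E3 :=
  (mi / (mi + mj)) • v + (mj / (mi + mj)) • vs -
    (mi / (mi + mj) * Real.sqrt (2 * R * EE mi mj v vs I Is / (mi * mj / (mi + mj)))) • σ

/-- Post-collisional internal energy `I' = r(1-R)E`. -/
def Iprime (mi mj : ℝ) (v vs : E3) (I Is r R : ℝ) : ℝ :=
  r * (1 - R) * EE mi mj v vs I Is

/-- Post-collisional partner internal energy `I'_* = (1-r)(1-R)E`. -/
def Isprime (mi mj : ℝ) (v vs : E3) (I Is r R : ℝ) : ℝ :=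
  (1 - r) * (1 - R) * EE mi mj v vs I Is

/-- Lebesgue bracket `⟨v,I⟩ = √(1 + m|v|²/(2m̄) + I/m̄)`. -/
def brk (mi mm : ℝ) (v : E3) (I : ℝ) : ℝ :=
  Real.sqrt (1 + mi * ‖v‖ ^ 2 / (2 * mm) + I / mm)

/-- Mass-ratio parameter `s̄_{ij} = min{m_i, m_j}/(m_i + m_j)`. -/
def sbar (mi mj : ℝ) : ℝ := min mi mj / (mi + mj)

/-- The weight `d_{ij}(r,R) = r^{α_i}(1-r)^{α_j}(1-R)^{α_i+α_j+1}√R`. -/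
def dij (ai aj r R : ℝ) : ℝ :=
  r ^ ai * (1 - r) ^ aj * (1 - R) ^ (ai + aj + 1) * Real.sqrt R

/-- The constant `ρ(q) = ∫_{[0,1]²} r^{-(1+γ/2)/q}(1-R)^{-1/q} d_{ij}(r,R) b̃(r,R) dr dR`. -/
def rhoC (ai aj γ q : ℝ) (btil : ℝ → ℝ → ℝ) : ℝ≥0∞ :=
  ∫⁻ rR in Icc (0 : ℝ) 1 ×ˢ Icc (0 : ℝ) 1,
    ENNReal.ofReal (rR.1 ^ (-((1 + γ / 2) / q)) * (1 - rR.2) ^ (-(1 / q))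
      * dij ai aj rR.1 rR.2 * btil rR.1 rR.2)

/-- Normalized relative velocity `û = (v - v_*)/|v - v_*|`. -/
def uhat (v vs : E3) : E3 := ‖v - vs‖⁻¹ • (v - vs)

/-- The averaging operator
`S(χ)(v,I,v_*,I_*) = ∫_{𝕊²×[0,1]²} χ(v',I') b(û·σ) r^{-γ/(2q)} d_{ij}(r,R) b̃(r,R) dr dR dσ`,
read as `0` when `u = 0`. -/
def Sop (mi mj ai aj γ q : ℝ) (b : ℝ → ℝ) (btil : ℝ → ℝ → ℝ) (χ : E3 × ℝ → ℝ)
    (v : E3) (I : ℝ) (vs : E3) (Is : ℝ) : ℝ≥0∞ :=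
  if v = vs then 0 else
    ∫⁻ σ, (∫⁻ rR in Icc (0 : ℝ) 1 ×ˢ Icc (0 : ℝ) 1,
      ENNReal.ofReal (χ (vprime mi mj v vs (σ : E3) I Is rR.2,
          Iprime mi mj v vs I Is rR.1 rR.2)
        * b (inner ℝ (uhat v vs) (σ : E3))
        * rR.1 ^ (-(γ / (2 * q))) * dij ai aj rR.1 rR.2 * btil rR.1 rR.2)) ∂sphM

/-- The (unweighted) `L^q` norm on `ℝ³ × [0,∞)`. -/
def LqN (q : ℝ) (χ : E3 × ℝ → ℝ) : ℝ≥0∞ :=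
  (∫⁻ p in regionVI, ENNReal.ofReal (χ p) ^ q) ^ (1 / q)

/-- The polynomially weighted `L^p` norm `‖φ‖_{L^p_{i,s}}`. -/
def LpW (pp s mi mm : ℝ) (φ : E3 × ℝ → ℝ) : ℝ≥0∞ :=
  (∫⁻ x in regionVI, ENNReal.ofReal (φ x * brk mi mm x.1 x.2 ^ s) ^ pp) ^ (1 / pp)

/-- The gain part `Q⁺(f,g)` of the collision operator (integrand read as `0` when
`I' I'_* = 0`). -/
def Qgain (mi mj ai aj : ℝ)
    (B : (E3 × ℝ) × (E3 × ℝ) × Metric.sphere (0 : E3) 1 × ℝ × ℝ → ℝ)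
    (f g : E3 × ℝ → ℝ) (v : E3) (I : ℝ) : ℝ≥0∞ :=
  ∫⁻ x in regionVI, ∫⁻ σ, (∫⁻ rR in Icc (0 : ℝ) 1 ×ˢ Icc (0 : ℝ) 1,
    ENNReal.ofReal (
      if Iprime mi mj v x.1 I x.2 rR.1 rR.2 * Isprime mi mj v x.1 I x.2 rR.1 rR.2 = 0 then 0
      else f (vprime mi mj v x.1 (σ : E3) I x.2 rR.2, Iprime mi mj v x.1 I x.2 rR.1 rR.2)
        * g (vsprime mi mj v x.1 (σ : E3) I x.2 rR.2, Isprime mi mj v x.1 I x.2 rR.1 rR.2)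
        * (I / Iprime mi mj v x.1 I x.2 rR.1 rR.2) ^ ai
        * (x.2 / Isprime mi mj v x.1 I x.2 rR.1 rR.2) ^ aj
        * B ((v, I), x, σ, rR.1, rR.2) * dij ai aj rR.1 rR.2)) ∂sphM
private lemma norm_sq_lower (v vs : E3) : ‖v‖ ^ 2 / 2 - ‖vs‖ ^ 2 ≤ ‖v - vs‖ ^ 2 := by
  have h1 := norm_sub_sq_real v vs
  have h2 := real_inner_le_norm v vs
  nlinarith [sq_nonneg (‖v‖ - 2 * ‖vs‖), norm_nonneg v, norm_nonneg vs]

private lemma brk_one_le (mi mm : ℝ) (v : E3) (I : ℝ) (hmi : 0 ≤ mi) (hmm : 0 < mm)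
    (hI : 0 ≤ I) : 1 ≤ brk mi mm v I := by
  have h1 : 0 ≤ mi * ‖v‖ ^ 2 / (2 * mm) := by positivity
  have h2 : 0 ≤ I / mm := div_nonneg hI hmm.le
  have : Real.sqrt 1 ≤ Real.sqrt (1 + mi * ‖v‖ ^ 2 / (2 * mm) + I / mm) :=
    Real.sqrt_le_sqrt (by linarith)
  simpa [Real.sqrt_one, brk] using this

private lemma brk_sq_eq (mi mm : ℝ) (v : E3) (I : ℝ) (hmi : 0 ≤ mi) (hmm : 0 < mm)
    (hI : 0 ≤ I) : brk mi mm v I ^ 2 = 1 + mi * ‖v‖ ^ 2 / (2 * mm) + I / mm := by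
  have h1 : 0 ≤ mi * ‖v‖ ^ 2 / (2 * mm) := by positivity
  have h2 : 0 ≤ I / mm := div_nonneg hI hmm.le
  rw [brk, Real.sq_sqrt (by linarith)]

set_option maxHeartbeats 2000000 in
private lemma pointwise_key (mi mj mm R δv : ℝ) (hmi : 0 < mi) (hmj : 0 < mj) (hmm : 0 < mm)
    (hR : 1 ≤ R) (hδ : 0 < δv) :
    ∃ c3 : ℝ, 0 < c3 ∧ c3 ≤ 1 ∧
      ∀ (v vs : E3) (I Is : ℝ), 0 ≤ I → 0 ≤ Is →
        brk mj mm vs Is ≤ R → (δv ≤ ‖vs - v‖ ∨ δv ≤ Is) →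
        c3 * (1 + mi * ‖v‖ ^ 2 / (2 * mm) + I / mm) ≤ EE mi mj v vs I Is / mm := by
  have hij : 0 < mi + mj := by linarith
  set mu := mi * mj / (mi + mj) with hmu_def
  have hmu : 0 < mu := by rw [hmu_def]; positivity
  set β := min (mu / (2 * mi)) 1 with hβ_def
  have hβ0 : 0 < β := lt_min (div_pos hmu (by positivity)) one_pos
  have hβ1 : β ≤ 1 := min_le_right _ _
  set e0 := min (mu * δv ^ 2 / 2) δv with he0_def
  have he0 : 0 < e0 := lt_min (div_pos (mul_pos hmu (pow_pos hδ 2)) two_pos) hδ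
  set K := 2 * (β + R ^ 2) / β with hK_def
  have hK : 0 < K := div_pos (by nlinarith) hβ0
  have hmmK : 0 < mm * K := mul_pos hmm hK
  refine ⟨min (min (β / 2) (e0 / (mm * K))) 1,
    lt_min (lt_min (half_pos hβ0) (div_pos he0 hmmK)) one_pos,
    min_le_right _ _, ?_⟩
  intro v vs I Is hI hIs hbrk hfar
  set c3 := min (min (β / 2) (e0 / (mm * K))) 1 with hc3_def
  have hc30 : 0 < c3 := lt_min (lt_min (half_pos hβ0) (div_pos he0 hmmK)) one_pos
  have hc3a : c3 ≤ β / 2 := le_trans (min_le_left _ _) (min_le_left _ _)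
  have hc3b : c3 ≤ e0 / (mm * K) := le_trans (min_le_left _ _) (min_le_right _ _)
  have he0a : e0 ≤ mu * δv ^ 2 / 2 := min_le_left _ _
  have he0b : e0 ≤ δv := min_le_right _ _
  have hβa : β ≤ mu / (2 * mi) := min_le_left _ _
  have hEE : EE mi mj v vs I Is = mu / 2 * ‖v - vs‖ ^ 2 + I + Is := by
    rw [hmu_def]; rfl
  have hmueq : mu * (mi + mj) = mi * mj := by
    rw [hmu_def]; exact div_mul_cancel₀ _ hij.ne'
  clear_value mu β e0 K c3
  set W := 1 + mi * ‖v‖ ^ 2 / (2 * mm) + I / mm with hW_def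
  have hW1 : 1 ≤ W := by
    have h1 : 0 ≤ mi * ‖v‖ ^ 2 / (2 * mm) := by positivity
    have h2 : 0 ≤ I / mm := div_nonneg hI hmm.le
    rw [hW_def]; linarith
  clear_value W
  -- (1) lower bound e0 on the good set
  have hE1 : e0 ≤ EE mi mj v vs I Is := by
    rcases hfar with h | h
    · have hd : δv ^ 2 ≤ ‖v - vs‖ ^ 2 := by
        rw [norm_sub_rev]; exact pow_le_pow_left₀ hδ.le h 2
      have he0' : e0 ≤ mu * δv ^ 2 / 2 := he0a
      rw [hEE]; nlinarith
    · have he0' : e0 ≤ δv := he0b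
      have h3 : 0 ≤ mu / 2 * ‖v - vs‖ ^ 2 := by positivity
      rw [hEE]; linarith
  -- bound on ‖vs‖²
  have hvs2 : mj * ‖vs‖ ^ 2 / (2 * mm) ≤ R ^ 2 := by
    have h1 : 0 ≤ mj * ‖vs‖ ^ 2 / (2 * mm) := by positivity
    have h2 : 0 ≤ Is / mm := div_nonneg hIs hmm.le
    have hsq : brk mj mm vs Is ^ 2 ≤ R ^ 2 :=
      pow_le_pow_left₀ (Real.sqrt_nonneg _) hbrk 2
    rw [brk_sq_eq mj mm vs Is hmj.le hmm hIs] at hsq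
    linarith
  -- (2) the quadratic lower bound
  have hE2 : β * (W - 1) - R ^ 2 ≤ EE mi mj v vs I Is / mm := by
    have htri := norm_sq_lower v vs
    have h1 : β * (mi * ‖v‖ ^ 2 / (2 * mm)) ≤ mu / (2 * mi) * (mi * ‖v‖ ^ 2 / (2 * mm)) :=
      mul_le_mul_of_nonneg_right hβa (by positivity)
    have h1' : mu / (2 * mi) * (mi * ‖v‖ ^ 2 / (2 * mm)) = mu * ‖v‖ ^ 2 / (4 * mm) := by
      field_simp; ring
    have h2 : β * (I / mm) ≤ I / mm := by
      have := div_nonneg hI hmm.le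
      nlinarith
    have hmumj : mu ≤ mj := by nlinarith [sq_nonneg mj, hmueq, hij]
    have h3 : mu / (2 * mm) * ‖vs‖ ^ 2 ≤ R ^ 2 := by
      have he : mu / (2 * mm) * ‖vs‖ ^ 2 = (mu / mj) * (mj * ‖vs‖ ^ 2 / (2 * mm)) := by
        field_simp
      have hq : mu / mj ≤ 1 := (div_le_one hmj).mpr hmumj
      rw [he]
      calc (mu / mj) * (mj * ‖vs‖ ^ 2 / (2 * mm))
          ≤ 1 * (mj * ‖vs‖ ^ 2 / (2 * mm)) :=
            mul_le_mul_of_nonneg_right hq (by positivity)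
        _ ≤ R ^ 2 := by rw [one_mul]; exact hvs2
    have h4 : mu / 2 * (‖v‖ ^ 2 / 2 - ‖vs‖ ^ 2) + I ≤ EE mi mj v vs I Is := by
      rw [hEE]; nlinarith
    have h5 : (mu / 2 * (‖v‖ ^ 2 / 2 - ‖vs‖ ^ 2) + I) / mm
        = mu * ‖v‖ ^ 2 / (4 * mm) - mu / (2 * mm) * ‖vs‖ ^ 2 + I / mm := by
      field_simp; ring
    have h6 : (mu / 2 * (‖v‖ ^ 2 / 2 - ‖vs‖ ^ 2) + I) / mm ≤ EE mi mj v vs I Is / mm :=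
      (div_le_div_iff_of_pos_right hmm).mpr h4
    have hexp : β * (W - 1) = β * (mi * ‖v‖ ^ 2 / (2 * mm)) + β * (I / mm) := by
      rw [hW_def]; ring
    linarith
  rcases le_or_gt W K with hWK | hWK
  · have hc : c3 ≤ e0 / (mm * K) := hc3b
    have hstep : c3 * W ≤ e0 / (mm * K) * K := by
      calc c3 * W ≤ e0 / (mm * K) * W :=
            mul_le_mul_of_nonneg_right hc (by linarith)
        _ ≤ e0 / (mm * K) * K :=
            mul_le_mul_of_nonneg_left hWK (div_pos he0 hmmK).le
    have heq : e0 / (mm * K) * K = e0 / mm := by field_simp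
    have hEdiv : e0 / mm ≤ EE mi mj v vs I Is / mm := (div_le_div_iff_of_pos_right hmm).mpr hE1
    calc c3 * W ≤ e0 / mm := by rw [← heq]; exact hstep
      _ ≤ _ := hEdiv
  · have hc : c3 ≤ β / 2 := hc3a
    have hβK : β * K = 2 * (β + R ^ 2) := by
      rw [hK_def]; field_simp
    have hβW : β * K ≤ β * W := mul_le_mul_of_nonneg_left hWK.le hβ0.le
    have hE2' : β * W - β - R ^ 2 ≤ EE mi mj v vs I Is / mm := by
      have : β * (W - 1) = β * W - β := by ring
      linarith
    have hcW : c3 * W ≤ β / 2 * W := mul_le_mul_of_nonneg_right hc (by linarith)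
    have h7 : β / 2 * W ≤ β * W - β - R ^ 2 := by linarith
    linarith

/-- Lemma 6.1 (Lower Bound Lemma): entropy-based lower bound for the weak form of the
velocity-internal-energy kernel `(E/m)^{γ/2}` against `g`. -/
theorem kernel_weak_form_lower_bound
    (mi mj mm γ : ℝ) (hmi : 0 < mi) (hmj : 0 < mj) (hmm : 0 < mm)
    (hγ0 : 0 ≤ γ) (hγ2 : γ ≤ 2)
    (g : E3 × ℝ → ℝ) (hg : Measurable g) (hg0 : ∀ x, 0 ≤ g x)
    (hmass0 : 0 < ∫⁻ x in regionVI, ENNReal.ofReal (g x))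
    (hmass : (∫⁻ x in regionVI, ENNReal.ofReal (g x)) < ⊤)
    (hmom : (∫⁻ x in regionVI, ENNReal.ofReal (g x * brk mj mm x.1 x.2 ^ γ)) < ⊤)
    (hent : (∫⁻ x in regionVI, ENNReal.ofReal (g x * |Real.log (g x)|)) < ⊤) :
    ∃ c : ℝ, 0 < c ∧ ∀ (v : E3) (I : ℝ), 0 ≤ I →
      ENNReal.ofReal (c * brk mi mm v I ^ γ)
        ≤ ∫⁻ x in regionVI,
            ENNReal.ofReal (g x * (EE mi mj v x.1 I x.2 / mm) ^ (γ / 2)) := by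
  classical
  have hγ2' : γ / 2 ≤ 1 := by linarith
  have hγ0' : 0 ≤ γ / 2 := by linarith
  have hreg : MeasurableSet regionVI :=
    measurableSet_le measurable_const measurable_snd
  set ν : Measure (E3 × ℝ) :=
    ((volume : Measure (E3 × ℝ)).restrict regionVI).withDensity
      (fun x => ENNReal.ofReal (g x)) with hν_def
  have hνs : ∀ s : Set (E3 × ℝ), MeasurableSet s →
      ν s = ∫⁻ x in s, ENNReal.ofReal (g x) ∂((volume : Measure (E3 × ℝ)).restrict regionVI) :=
    fun s hs => withDensity_apply _ hs
  have hνuniv : ν univ = ∫⁻ x in regionVI, ENNReal.ofReal (g x) := by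
    rw [hνs univ MeasurableSet.univ, Measure.restrict_univ]
  have hG0 : ν univ ≠ 0 := by rw [hνuniv]; exact hmass0.ne'
  have hGt : ν univ ≠ ⊤ := by rw [hνuniv]; exact hmass.ne
  haveI : IsFiniteMeasure ν := ⟨lt_top_iff_ne_top.mpr hGt⟩
  set q2 := ν univ / 2 with hq2_def
  set q4 := q2 / 2 with hq4_def
  have hq2 : 0 < q2 := ENNReal.half_pos hG0
  have hq4 : 0 < q4 := ENNReal.half_pos hq2.ne'
  have hq2t : q2 ≠ ⊤ := (ENNReal.div_lt_top hGt (by norm_num)).ne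
  have hq4t : q4 ≠ ⊤ := (ENNReal.div_lt_top hq2t (by norm_num)).ne
  -- continuity/measurability of the bracket
  have hbrkc : Continuous fun x : E3 × ℝ => brk mj mm x.1 x.2 := by
    unfold brk
    exact Real.continuous_sqrt.comp (by fun_prop)
  -- Step 1: most of the mass lives where the bracket is bounded
  set T : ℕ → Set (E3 × ℝ) := fun n => {x | (n : ℝ) < brk mj mm x.1 x.2} with hT_def
  have hTm : ∀ n, MeasurableSet (T n) := fun n =>
    measurableSet_lt measurable_const hbrkc.measurable
  have hTanti : Antitone T := by
    intro a b hab x hx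
    have hab' : (a : ℝ) ≤ (b : ℝ) := Nat.cast_le.mpr hab
    exact lt_of_le_of_lt hab' hx
  have hTempty : ⋂ n, T n = ∅ := by
    ext x
    simp only [mem_iInter, mem_empty_iff_false, iff_false, not_forall]
    obtain ⟨n, hn⟩ := exists_nat_gt (brk mj mm x.1 x.2)
    refine ⟨n, ?_⟩
    simp only [hT_def, mem_setOf_eq, not_lt]
    exact hn.le
  have htend : Filter.Tendsto (fun n => ν (T n)) Filter.atTop (nhds 0) := by
    have h := tendsto_measure_iInter_atTop (μ := ν)
      (fun n => (hTm n).nullMeasurableSet) hTanti ⟨0, measure_ne_top ν _⟩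
    rw [hTempty, measure_empty] at h
    exact h
  obtain ⟨n, hn⟩ : ∃ n, ν (T n) < q2 := (htend.eventually_lt_const hq2).exists
  set R : ℝ := max (n : ℝ) 1 with hR_def
  have hR1 : 1 ≤ R := le_max_right _ _
  set A : Set (E3 × ℝ) := {x | brk mj mm x.1 x.2 ≤ R} ∩ regionVI with hA_def
  have hAm : MeasurableSet A :=
    (measurableSet_le hbrkc.measurable measurable_const).inter hreg
  have hνcompl : ν regionVIᶜ = 0 := by
    rw [hνs _ hreg.compl]
    refine setLIntegral_measure_zero _ _ ?_
    rw [Measure.restrict_apply hreg.compl, compl_inter_self, measure_empty]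
  have hA2 : q2 ≤ ν A := by
    have hcov : (univ : Set (E3 × ℝ)) ⊆ A ∪ (T n ∪ regionVIᶜ) := by
      intro x _
      by_cases hx2 : 0 ≤ x.2
      · rcases le_or_gt (brk mj mm x.1 x.2) R with h | h
        · exact Or.inl ⟨h, hx2⟩
        · exact Or.inr (Or.inl (lt_of_le_of_lt (le_max_left _ _) h))
      · exact Or.inr (Or.inr (fun h => hx2 h))
    have h1 : ν univ ≤ ν A + (ν (T n) + ν regionVIᶜ) :=
      le_trans (measure_mono hcov)
        (le_trans (measure_union_le _ _) (add_le_add_right (measure_union_le _ _) _))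
    rw [hνcompl, add_zero] at h1
    by_contra hcon
    push_neg at hcon
    have h2 : ν A + ν (T n) < q2 + q2 := ENNReal.add_lt_add hcon hn
    rw [hq2_def, ENNReal.add_halves] at h2
    exact absurd (lt_of_le_of_lt h1 h2) (lt_irrefl _)
  -- Step 2: absolute continuity of the integral
  obtain ⟨δ', hδ'0, hδ'⟩ := exists_pos_setLIntegral_lt_of_measure_lt
    (μ := (volume : Measure (E3 × ℝ)).restrict regionVI)
    (f := fun x => ENNReal.ofReal (g x))
    (by rw [← setLIntegral_univ, ← hνs univ MeasurableSet.univ]; exact hGt) hq4.ne'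
  set C : ℝ≥0∞ := volume (Metric.ball (0 : E3) 1) + 1 with hC_def
  have hC0 : C ≠ 0 := by simp [hC_def]
  have hCt : C ≠ ⊤ := by
    have hb := measure_ball_lt_top (μ := (volume : Measure E3)) (x := (0 : E3)) (r := 1)
    rw [hC_def]
    exact (ENNReal.add_lt_top.mpr ⟨hb, ENNReal.one_lt_top⟩).ne
  set δ'' := min δ' 1 with hδ''_def
  have hδ''0 : δ'' ≠ 0 := (lt_min hδ'0 zero_lt_one).ne'
  have hδ''t : δ'' ≠ ⊤ := ((min_le_right _ _).trans_lt ENNReal.one_lt_top).ne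
  have h2C0 : (2 : ℝ≥0∞) * C ≠ 0 := by simp [hC0]
  have h2Ct : (2 : ℝ≥0∞) * C ≠ ⊤ := ENNReal.mul_ne_top (by norm_num) hCt
  have hfrac0 : δ'' / (2 * C) ≠ 0 := (ENNReal.div_pos hδ''0 h2Ct).ne'
  have hfract : δ'' / (2 * C) ≠ ⊤ := (ENNReal.div_lt_top hδ''t h2C0).ne
  set δv : ℝ := min 1 ((δ'' / (2 * C)).toReal) with hδv_def
  have hδv0 : 0 < δv := lt_min one_pos (ENNReal.toReal_pos hfrac0 hfract)
  have hδv1 : δv ≤ 1 := min_le_left _ _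
  have hkey : ENNReal.ofReal δv * (2 * C) ≤ δ'' := by
    rw [← ENNReal.le_div_iff_mul_le (Or.inl h2C0) (Or.inl h2Ct)]
    calc ENNReal.ofReal δv ≤ ENNReal.ofReal ((δ'' / (2 * C)).toReal) :=
          ENNReal.ofReal_le_ofReal (min_le_right _ _)
      _ = δ'' / (2 * C) := ENNReal.ofReal_toReal hfract
  have hCδ : C * ENNReal.ofReal δv < δ'' := by
    by_contra hcon
    push_neg at hcon
    have h1 : δ'' + δ'' ≤ (C * ENNReal.ofReal δv) + (C * ENNReal.ofReal δv) :=
      add_le_add hcon hcon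
    have h2 : (C * ENNReal.ofReal δv) + (C * ENNReal.ofReal δv)
        = ENNReal.ofReal δv * (2 * C) := by ring
    have h3 : δ'' < δ'' + δ'' :=
      ENNReal.lt_add_right hδ''t hδ''0
    rw [h2] at h1
    exact absurd (lt_of_lt_of_le h3 (le_trans h1 hkey)) (lt_irrefl _)
  have hvol : ∀ v : E3, volume (Metric.ball v δv ×ˢ Ico (0 : ℝ) δv) < δ' := by
    intro v
    rw [Measure.volume_eq_prod, Measure.prod_prod, Real.volume_Ico,
      Measure.addHaar_ball_center]
    have hb1 : volume (Metric.ball (0 : E3) δv) ≤ C := by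
      rw [hC_def]
      exact le_trans (measure_mono (Metric.ball_subset_ball hδv1)) le_self_add
    calc volume (Metric.ball (0 : E3) δv) * ENNReal.ofReal (δv - 0)
        ≤ C * ENNReal.ofReal δv := by
          rw [sub_zero]
          exact mul_le_mul_left hb1 _
      _ < δ'' := hCδ
      _ ≤ δ' := min_le_left _ _
  have hBν : ∀ v : E3, ν (Metric.ball v δv ×ˢ Ico (0 : ℝ) δv) < q4 := by
    intro v
    rw [hνs _ (measurableSet_ball.prod measurableSet_Ico)]
    exact hδ' _ (lt_of_le_of_lt (Measure.restrict_apply_le _ _) (hvol v))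
  -- Step 3: the pointwise bound
  obtain ⟨c3, hc30, hc31, hc3⟩ := pointwise_key mi mj mm R δv hmi hmj hmm hR1 hδv0
  refine ⟨c3 * q4.toReal, mul_pos hc30 (ENNReal.toReal_pos hq4.ne' hq4t), ?_⟩
  intro v I hI
  set B : Set (E3 × ℝ) := Metric.ball v δv ×ˢ Ico (0 : ℝ) δv with hB_def
  have hBm : MeasurableSet B := measurableSet_ball.prod measurableSet_Ico
  set Good : Set (E3 × ℝ) := A \ B with hGood_def
  have hGoodm : MeasurableSet Good := hAm.diff hBm
  have hGoodν : q4 ≤ ν Good := by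
    have h1 : ν A ≤ ν Good + ν B :=
      le_trans (measure_mono (subset_diff_union A B)) (measure_union_le _ _)
    have h2 : q4 + q4 ≤ ν Good + q4 := by
      calc q4 + q4 = q2 := by rw [hq4_def, ENNReal.add_halves]
        _ ≤ ν A := hA2
        _ ≤ ν Good + ν B := h1
        _ ≤ ν Good + q4 := add_le_add_right (hBν v).le _
    exact (ENNReal.add_le_add_iff_right hq4t).mp h2
  -- the pointwise inequality on the good set
  have hbrk1 : 1 ≤ brk mi mm v I := brk_one_le mi mm v I hmi.le hmm hI
  have hbrknn : 0 ≤ brk mi mm v I := Real.sqrt_nonneg _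
  have hbrkγ : 0 ≤ brk mi mm v I ^ γ := Real.rpow_nonneg hbrknn _
  have hptb : ∀ x ∈ Good,
      c3 * brk mi mm v I ^ γ ≤ (EE mi mj v x.1 I x.2 / mm) ^ (γ / 2) := by
    intro x hx
    obtain ⟨⟨hxbrk, hx2⟩, hxB⟩ := hx
    have hfar : δv ≤ ‖x.1 - v‖ ∨ δv ≤ x.2 := by
      by_cases hball : x.1 ∈ Metric.ball v δv
      · right
        by_contra hcon
        push_neg at hcon
        exact hxB ⟨hball, hx2, hcon⟩
      · left
        rw [Metric.mem_ball, not_lt, dist_eq_norm] at hball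
        exact hball
    have hkey := hc3 v x.1 I x.2 hI hx2 hxbrk hfar
    have hW2 : brk mi mm v I ^ (2 : ℕ) = 1 + mi * ‖v‖ ^ 2 / (2 * mm) + I / mm :=
      brk_sq_eq mi mm v I hmi.le hmm hI
    have hWnn : (0 : ℝ) ≤ 1 + mi * ‖v‖ ^ 2 / (2 * mm) + I / mm := by
      rw [← hW2]; positivity
    have h1 : (c3 * (1 + mi * ‖v‖ ^ 2 / (2 * mm) + I / mm)) ^ (γ / 2)
        ≤ (EE mi mj v x.1 I x.2 / mm) ^ (γ / 2) :=
      Real.rpow_le_rpow (by positivity) hkey hγ0'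
    have h2 : (c3 * (1 + mi * ‖v‖ ^ 2 / (2 * mm) + I / mm)) ^ (γ / 2)
        = c3 ^ (γ / 2) * (1 + mi * ‖v‖ ^ 2 / (2 * mm) + I / mm) ^ (γ / 2) :=
      Real.mul_rpow hc30.le hWnn
    have h3 : (1 + mi * ‖v‖ ^ 2 / (2 * mm) + I / mm) ^ (γ / 2)
        = brk mi mm v I ^ γ := by
      rw [← hW2, ← Real.rpow_natCast (brk mi mm v I) 2,
        ← Real.rpow_mul hbrknn]
      push_cast
      rw [show (2 : ℝ) * (γ / 2) = γ by ring]
    have h4 : c3 ≤ c3 ^ (γ / 2) := by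
      calc c3 = c3 ^ (1 : ℝ) := (Real.rpow_one _).symm
        _ ≤ c3 ^ (γ / 2) := Real.rpow_le_rpow_of_exponent_ge hc30 hc31 hγ2'
    calc c3 * brk mi mm v I ^ γ ≤ c3 ^ (γ / 2) * brk mi mm v I ^ γ :=
          mul_le_mul_of_nonneg_right h4 hbrkγ
      _ = (c3 * (1 + mi * ‖v‖ ^ 2 / (2 * mm) + I / mm)) ^ (γ / 2) := by
          rw [h2, h3]
      _ ≤ _ := h1
  -- main chain
  have hmain : ENNReal.ofReal (c3 * brk mi mm v I ^ γ) * q4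
      ≤ ∫⁻ x in regionVI,
          ENNReal.ofReal (g x * (EE mi mj v x.1 I x.2 / mm) ^ (γ / 2)) := by
    calc ENNReal.ofReal (c3 * brk mi mm v I ^ γ) * q4
        ≤ ENNReal.ofReal (c3 * brk mi mm v I ^ γ) * ν Good :=
          mul_le_mul_right hGoodν _
      _ = ENNReal.ofReal (c3 * brk mi mm v I ^ γ)
            * ∫⁻ x in Good, ENNReal.ofReal (g x)
                ∂((volume : Measure (E3 × ℝ)).restrict regionVI) := by
          rw [hνs Good hGoodm]
      _ = ∫⁻ x in Good, ENNReal.ofReal (c3 * brk mi mm v I ^ γ) * ENNReal.ofReal (g x)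
            ∂((volume : Measure (E3 × ℝ)).restrict regionVI) :=
          (lintegral_const_mul' _ _ ENNReal.ofReal_ne_top).symm
      _ ≤ ∫⁻ x in Good, ENNReal.ofReal (g x * (EE mi mj v x.1 I x.2 / mm) ^ (γ / 2))
            ∂((volume : Measure (E3 × ℝ)).restrict regionVI) := by
          refine setLIntegral_mono' hGoodm (fun x hx => ?_)
          rw [← ENNReal.ofReal_mul (by positivity)]
          refine ENNReal.ofReal_le_ofReal ?_
          calc c3 * brk mi mm v I ^ γ * g x
              = g x * (c3 * brk mi mm v I ^ γ) := by ring
            _ ≤ g x * (EE mi mj v x.1 I x.2 / mm) ^ (γ / 2) :=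
              mul_le_mul_of_nonneg_left (hptb x hx) (hg0 x)
      _ ≤ ∫⁻ x, ENNReal.ofReal (g x * (EE mi mj v x.1 I x.2 / mm) ^ (γ / 2))
            ∂((volume : Measure (E3 × ℝ)).restrict regionVI) :=
          setLIntegral_le_lintegral _ _
  calc ENNReal.ofReal (c3 * q4.toReal * brk mi mm v I ^ γ)
      = ENNReal.ofReal ((c3 * brk mi mm v I ^ γ) * q4.toReal) := by ring_nf
    _ = ENNReal.ofReal (c3 * brk mi mm v I ^ γ) * ENNReal.ofReal q4.toReal :=
        ENNReal.ofReal_mul (by positivity)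
    _ = ENNReal.ofReal (c3 * brk mi mm v I ^ γ) * q4 := by
        rw [ENNReal.ofReal_toReal hq4t]
    _ ≤ _ := hmain
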